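/- Let G be an infinite discrete group and let μ be an irreducible probability measure on G. Then there exists a strictly increasing sequence (n_i) of natural numbers such that for every s ∈ ℕ and every g ∈ G, μ^{⋆(n_i+s)}({g}) → 0 as i → ∞; that is, the measures μ^{⋆(n_i+s)} converge to 0 in the weak* topology σ(ℓ¹(G), c₀(G)) simultaneously for all shifts s. -/

import Mathlib

open Filter Topology
open scoped Classical

variable {G : Type*}

/-- Convolution of two summable "measures" (functions) on a discrete group:
`(ν ⋆ μ)(g) = ∑_{a·b=g} ν(a) μ(b)`. -/
noncomputable def mconv [Group G] (ν μ : G → ℝ) : G → ℝ :=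
  fun g => ∑' a : G, ν a * μ (a⁻¹ * g)

/-- The `n`-th convolution power of `μ`, with `convPow μ 0 = δ_e` and `convPow μ 1 = μ`. -/
noncomputable def convPow [Group G] (μ : G → ℝ) : ℕ → G → ℝ
  | 0 => fun g => if g = 1 then 1 else 0
  | n + 1 => mconv (convPow μ n) μ

/-- `μ` is a probability measure on the discrete group `G`. -/
def IsProbMeas [Group G] (μ : G → ℝ) : Prop :=
  (∀ g, 0 ≤ μ g) ∧ HasSum μ 1

/-- `μ` is irreducible: every point is charged by some convolution power `μ^{⋆n}`, `n ≥ 1`. -/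
def MeasIrreducible [Group G] (μ : G → ℝ) : Prop :=
  ∀ g : G, ∃ n : ℕ, 1 ≤ n ∧ 0 < convPow μ n g

/-- The convolution action of a measure `μ` on a function `f ∈ c₀(G)`:
`(f ⋆ μ)(g) = ∑_h f(g·h) μ(h)`. -/
noncomputable def actConv [Group G] (f : G → ℂ) (μ : G → ℝ) : G → ℂ :=
  fun g => ∑' h : G, f (g * h) * (μ h : ℂ)

/-- A function on a discrete space vanishes at infinity iff it tends to `0`
along the cofinite filter. -/
def ZeroAtInfty (f : G → ℂ) : Prop := Tendsto f cofinite (𝓝 0)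

/-! ### Auxiliary ENNReal-valued layer -/

open scoped ENNReal

/-- ENNReal-valued convolution power. -/
noncomputable def ePow [Group G] (ν : G → ℝ≥0∞) : ℕ → G → ℝ≥0∞
  | 0 => fun g => if g = 1 then 1 else 0
  | n + 1 => fun g => ∑' a : G, ePow ν n a * ν (a⁻¹ * g)

section ENNLayer
variable [Group G] {ν : G → ℝ≥0∞}

lemma tsum_shift (ν : G → ℝ≥0∞) (a : G) : ∑' g : G, ν (a⁻¹ * g) = ∑' g, ν g := by
  rw [← (Equiv.mulLeft a).tsum_eq (fun g => ν (a⁻¹ * g))]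
  simp

lemma ePow_mass (hν : ∑' g, ν g = 1) : ∀ n, ∑' g : G, ePow ν n g = 1
  | 0 => by simp [ePow, tsum_ite_eq]
  | n + 1 => by
    have h0 : ∑' (g : G), ePow ν (n+1) g = ∑' (g : G) (a : G), ePow ν n a * ν (a⁻¹ * g) := rfl
    rw [h0, ENNReal.tsum_comm]
    calc ∑' (a : G) (g : G), ePow ν n a * ν (a⁻¹ * g)
        = ∑' (a : G), ePow ν n a * ∑' (g : G), ν (a⁻¹ * g) := by
          simp [ENNReal.tsum_mul_left]
      _ = ∑' (a : G), ePow ν n a := by simp [tsum_shift ν, hν]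
      _ = 1 := ePow_mass hν n

lemma ePow_le_one (hν : ∑' g, ν g = 1) (n : ℕ) (g : G) : ePow ν n g ≤ 1 := by
  rw [← ePow_mass hν n]; exact ENNReal.le_tsum g

lemma ePow_ne_top (hν : ∑' g, ν g = 1) (n : ℕ) (g : G) : ePow ν n g ≠ ⊤ :=
  ((ePow_le_one hν n g).trans_lt ENNReal.one_lt_top).ne

lemma ePow_add : ∀ (k n : ℕ) (g : G), ePow ν (n + k) g = ∑' a : G, ePow ν n a * ePow ν k (a⁻¹ * g)
  | 0, n, g => by
    rw [Nat.add_zero]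
    have h : (∑' a : G, ePow ν n a * ePow ν 0 (a⁻¹ * g)) = ePow ν n g * ePow ν 0 (g⁻¹ * g) := by
      refine tsum_eq_single g fun a ha => ?_
      simp [ePow, inv_mul_eq_one, ha]
    rw [h]
    simp [ePow]
  | k + 1, n, g => by
    have h1 : ePow ν (n + (k+1)) g = ∑' a : G, ePow ν (n + k) a * ν (a⁻¹ * g) := rfl
    rw [h1]
    calc ∑' a : G, ePow ν (n + k) a * ν (a⁻¹ * g)
        = ∑' (a : G) (b : G), ePow ν n b * ePow ν k (b⁻¹ * a) * ν (a⁻¹ * g) := by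
          simp only [ePow_add k n, ENNReal.tsum_mul_right]
      _ = ∑' (b : G) (a : G), ePow ν n b * ePow ν k (b⁻¹ * a) * ν (a⁻¹ * g) :=
          ENNReal.tsum_comm
      _ = ∑' (b : G) (a : G), ePow ν n b * (ePow ν k a * ν (a⁻¹ * (b⁻¹ * g))) := by
          refine tsum_congr fun b => ?_
          rw [← (Equiv.mulLeft b).tsum_eq]
          refine tsum_congr fun a => ?_
          simp [mul_assoc, mul_inv_rev]
      _ = ∑' b : G, ePow ν n b * ePow ν (k+1) (b⁻¹ * g) := by
          refine tsum_congr fun b => ?_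
          rw [ENNReal.tsum_mul_left]
          rfl

lemma ePow_add' (n k : ℕ) (g : G) :
    ePow ν (n + k) g = ∑' h : G, ePow ν n (g * h⁻¹) * ePow ν k h := by
  rw [ePow_add k n g,
    ← (((Equiv.inv G).trans (Equiv.mulLeft g)).tsum_eq
      (fun a => ePow ν n a * ePow ν k (a⁻¹ * g)))]
  refine tsum_congr fun h => ?_
  simp [mul_inv_rev, mul_assoc]

end ENNLayer

/-! ### Bridge between `convPow` and `ePow` -/

/-- The ENNReal lift of a real measure. -/
noncomputable def nuOf (μ : G → ℝ) : G → ℝ≥0∞ := fun g => ENNReal.ofReal (μ g)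

section Bridge
variable [Group G] {μ : G → ℝ}

lemma nuOf_mass (hμ : IsProbMeas μ) : ∑' g, nuOf μ g = 1 := by
  simp only [nuOf]
  rw [← ENNReal.ofReal_tsum_of_nonneg hμ.1 hμ.2.summable, hμ.2.tsum_eq, ENNReal.ofReal_one]

lemma convPow_eq_toReal (hμ : IsProbMeas μ) :
    ∀ (n : ℕ) (g : G), convPow μ n g = (ePow (nuOf μ) n g).toReal
  | 0, g => by
    simp only [convPow, ePow]
    split <;> simp
  | n + 1, g => by
    have hmass := nuOf_mass hμ
    have h1 : convPow μ (n+1) g = ∑' a : G, convPow μ n a * μ (a⁻¹ * g) := rfl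
    rw [h1]
    have h2 : ∀ a : G, convPow μ n a * μ (a⁻¹ * g)
        = (ePow (nuOf μ) n a * nuOf μ (a⁻¹ * g)).toReal := by
      intro a
      rw [ENNReal.toReal_mul, convPow_eq_toReal hμ n a, nuOf, ENNReal.toReal_ofReal (hμ.1 _)]
    calc ∑' a : G, convPow μ n a * μ (a⁻¹ * g)
        = ∑' a : G, (ePow (nuOf μ) n a * nuOf μ (a⁻¹ * g)).toReal := tsum_congr h2
      _ = (∑' a : G, ePow (nuOf μ) n a * nuOf μ (a⁻¹ * g)).toReal :=
          (ENNReal.tsum_toReal_eq fun a =>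
            ENNReal.mul_ne_top (ePow_ne_top hmass n a) ENNReal.ofReal_ne_top).symm
      _ = (ePow (nuOf μ) (n+1) g).toReal := rfl

lemma convPow_nonneg (hμ : IsProbMeas μ) (n : ℕ) (g : G) : 0 ≤ convPow μ n g := by
  rw [convPow_eq_toReal hμ]; exact ENNReal.toReal_nonneg

lemma convPow_le_one (hμ : IsProbMeas μ) (n : ℕ) (g : G) : convPow μ n g ≤ 1 := by
  rw [convPow_eq_toReal hμ]
  simpa using ENNReal.toReal_mono ENNReal.one_ne_top (ePow_le_one (nuOf_mass hμ) n g)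

lemma summable_convPow (hμ : IsProbMeas μ) (n : ℕ) : Summable (convPow μ n) := by
  have h1 : ∑' g : G, ePow (nuOf μ) n g ≠ ⊤ := by
    rw [ePow_mass (nuOf_mass hμ) n]; exact ENNReal.one_ne_top
  have := ENNReal.summable_toReal h1
  simpa only [← convPow_eq_toReal hμ] using this

lemma tsum_convPow (hμ : IsProbMeas μ) (n : ℕ) : ∑' g : G, convPow μ n g = 1 := by
  rw [tsum_congr (convPow_eq_toReal hμ n),
    ← ENNReal.tsum_toReal_eq (fun g => ePow_ne_top (nuOf_mass hμ) n g),
    ePow_mass (nuOf_mass hμ) n, ENNReal.toReal_one]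

lemma sum_convPow_le_one (hμ : IsProbMeas μ) (n : ℕ) (F : Finset G) :
    ∑ g ∈ F, convPow μ n g ≤ 1 :=
  le_of_le_of_eq (Summable.sum_le_tsum F (fun g _ => convPow_nonneg hμ n g) (summable_convPow hμ n))
    (tsum_convPow hμ n)

lemma convPow_add_eq (hμ : IsProbMeas μ) (n k : ℕ) (g : G) :
    convPow μ (n + k) g = ∑' h : G, convPow μ n (g * h⁻¹) * convPow μ k h := by
  have hmass := nuOf_mass hμ
  have h2 : ∀ h : G, convPow μ n (g * h⁻¹) * convPow μ k h
      = (ePow (nuOf μ) n (g * h⁻¹) * ePow (nuOf μ) k h).toReal := by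
    intro h
    rw [ENNReal.toReal_mul, convPow_eq_toReal hμ, convPow_eq_toReal hμ]
  rw [tsum_congr h2,
    ← ENNReal.tsum_toReal_eq (fun h =>
      ENNReal.mul_ne_top (ePow_ne_top hmass n _) (ePow_ne_top hmass k _)),
    ← ePow_add' n k g, ← convPow_eq_toReal hμ]

lemma summable_convPow_add (hμ : IsProbMeas μ) (n k : ℕ) (g : G) :
    Summable (fun h : G => convPow μ n (g * h⁻¹) * convPow μ k h) := by
  have hmass := nuOf_mass hμ
  have h1 : ∑' h : G, ePow (nuOf μ) n (g * h⁻¹) * ePow (nuOf μ) k h ≠ ⊤ := by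
    rw [← ePow_add' n k g]; exact ePow_ne_top hmass (n + k) g
  have := ENNReal.summable_toReal h1
  have h2 : ∀ h : G, convPow μ n (g * h⁻¹) * convPow μ k h
      = (ePow (nuOf μ) n (g * h⁻¹) * ePow (nuOf μ) k h).toReal := by
    intro h
    rw [ENNReal.toReal_mul, convPow_eq_toReal hμ, convPow_eq_toReal hμ]
  rw [show (fun h : G => convPow μ n (g * h⁻¹) * convPow μ k h)
      = fun h : G => (ePow (nuOf μ) n (g * h⁻¹) * ePow (nuOf μ) k h).toReal from funext h2]
  exact this

lemma convPow_pos_mul (hμ : IsProbMeas μ) {n k : ℕ} {g h : G}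
    (hg : 0 < convPow μ n g) (hh : 0 < convPow μ k h) : 0 < convPow μ (n + k) (g * h) := by
  have hterm := Summable.le_tsum (summable_convPow_add hμ n k (g * h)) h
    (fun j _ => mul_nonneg (convPow_nonneg hμ n _) (convPow_nonneg hμ k j))
  rw [← convPow_add_eq hμ n k (g * h)] at hterm
  have he : g * h * h⁻¹ = g := by group
  rw [he] at hterm
  exact lt_of_lt_of_le (mul_pos hg hh) hterm

end Bridge

/-- For an infinite discrete group and an irreducible probability
measure `μ`, there is a subsequence `(n_i)` such that `μ^{⋆(n_i+s)} → 0` in the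
weak* topology `σ(ℓ¹(G), c₀(G))` (equivalently, pointwise) for every shift `s`. -/
theorem subsequence_weakstar_zero [Group G] [Infinite G] (μ : G → ℝ)
    (hμ : IsProbMeas μ) (hirr : MeasIrreducible μ) :
    ∃ n : ℕ → ℕ, StrictMono n ∧
      ∀ s : ℕ, ∀ g : G, Tendsto (fun i : ℕ => convPow μ (n i + s) g) atTop (𝓝 0) := by
  classical
  set P : ℕ → G → ℝ := convPow μ with hP
  have hnn : ∀ n g, 0 ≤ P n g := convPow_nonneg hμ
  have hle1 : ∀ n g, P n g ≤ 1 := convPow_le_one hμ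
  have hbdd : ∀ n, BddAbove (Set.range (P n)) := fun n => ⟨1, by rintro x ⟨g, rfl⟩; exact hle1 n g⟩
  set M : ℕ → ℝ := fun n => ⨆ g, P n g with hM
  have hPM : ∀ n g, P n g ≤ M n := fun n g => le_ciSup (hbdd n) g
  have hM0 : ∀ n, 0 ≤ M n := fun n => (hnn n 1).trans (hPM n 1)
  have hManti : Antitone M := by
    refine antitone_nat_of_succ_le fun n => ?_
    refine ciSup_le fun g => ?_
    have h1 : P (n + 1) g = ∑' h : G, P n (g * h⁻¹) * P 1 h := convPow_add_eq hμ n 1 g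
    rw [h1]
    calc (∑' h : G, P n (g * h⁻¹) * P 1 h)
        ≤ ∑' h : G, M n * P 1 h := by
          refine Summable.tsum_le_tsum (fun h => mul_le_mul_of_nonneg_right (hPM n _) (hnn 1 h))
            (summable_convPow_add hμ n 1 g) ((summable_convPow hμ 1).mul_left _)
      _ = M n * ∑' h : G, P 1 h := tsum_mul_left
      _ = M n := by rw [tsum_convPow hμ 1, mul_one]
  set c := ⨅ n, M n with hc
  have hMc : Tendsto M atTop (𝓝 c) :=
    tendsto_atTop_ciInf hManti ⟨0, by rintro x ⟨n, rfl⟩; exact hM0 n⟩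
  have hc0 : 0 ≤ c := le_ciInf hM0
  have hcz : c = 0 := by
    by_contra hne
    have hcpos : 0 < c := lt_of_le_of_ne hc0 (Ne.symm hne)
    -- near-maximizers
    have hex : ∀ n : ℕ, ∃ g : G, M n - 1 / (n + 1) < P n g := by
      intro n
      have h' : M n - 1 / ((n : ℝ) + 1) < M n := by
        have : (0 : ℝ) < 1 / ((n : ℝ) + 1) := by positivity
        linarith
      exact exists_lt_of_lt_ciSup h'
    choose gg hgg using hex
    -- key limit lemma
    have key : ∀ (k : ℕ) (h : G), 0 < P k h →
        Tendsto (fun n : ℕ => P n (gg (n + k) * h⁻¹)) atTop (𝓝 c) := by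
      intro k h hh
      have hub : ∀ n, P n (gg (n + k) * h⁻¹) ≤ M n := fun n => hPM n _
      have hlb : ∀ n : ℕ,
          M n - (M n - M (n + k) + 1 / ((n + k : ℕ) + 1)) / P k h ≤ P n (gg (n + k) * h⁻¹) := by
        intro n
        set g := gg (n + k) with hgdef
        have hs1 : Summable (fun h' : G => P k h' * M n) := (summable_convPow hμ k).mul_right _
        have hs2 : Summable (fun h' : G => P n (g * h'⁻¹) * P k h') :=
          summable_convPow_add hμ n k g
        have hs2' : Summable (fun h' : G => P k h' * P n (g * h'⁻¹)) := by
          simpa [mul_comm] using hs2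
        have hsub : Summable (fun h' : G => P k h' * M n - P k h' * P n (g * h'⁻¹)) :=
          hs1.sub hs2'
        have hterm : P k h * M n - P k h * P n (g * h⁻¹)
            ≤ ∑' h' : G, (P k h' * M n - P k h' * P n (g * h'⁻¹)) := by
          refine Summable.le_tsum hsub h fun j _ => ?_
          have := mul_le_mul_of_nonneg_left (hPM n (g * j⁻¹)) (hnn k j)
          linarith
        have htsum : (∑' h' : G, (P k h' * M n - P k h' * P n (g * h'⁻¹)))
            = M n - P (n + k) g := by
          rw [Summable.tsum_sub hs1 hs2']
          have e1 : ∑' h' : G, P k h' * M n = M n := by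
            rw [tsum_mul_right, tsum_convPow hμ k, one_mul]
          have e2 : ∑' h' : G, P k h' * P n (g * h'⁻¹) = P (n + k) g := by
            rw [tsum_congr (fun h' => mul_comm (P k h') (P n (g * h'⁻¹)))]
            exact (convPow_add_eq hμ n k g).symm
          rw [e1, e2]
        have hPg : M (n + k) - 1 / ((n + k : ℕ) + 1) < P (n + k) g := hgg (n + k)
        have hcomb := hterm.trans_eq htsum
        have hTle : P k h * (M n - P n (g * h⁻¹)) ≤ M n - M (n + k) + 1 / ((n + k : ℕ) + 1) := by
          rw [mul_sub]
          linarith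
        have hdiv : M n - P n (g * h⁻¹) ≤ (M n - M (n + k) + 1 / ((n + k : ℕ) + 1)) / P k h := by
          rw [le_div_iff₀ hh]
          calc (M n - P n (g * h⁻¹)) * P k h = P k h * (M n - P n (g * h⁻¹)) := mul_comm _ _
            _ ≤ _ := hTle
        linarith
      have h1 : Tendsto (fun n : ℕ => M (n + k)) atTop (𝓝 c) :=
        hMc.comp (tendsto_add_atTop_nat k)
      have h2 : Tendsto (fun n : ℕ => 1 / ((n + k : ℕ) + 1 : ℝ)) atTop (𝓝 0) :=
        tendsto_one_div_add_atTop_nhds_zero_nat.comp (tendsto_add_atTop_nat k)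
      have hL : Tendsto (fun n : ℕ => M n - (M n - M (n + k) + 1 / ((n + k : ℕ) + 1)) / P k h)
          atTop (𝓝 c) := by
        have := hMc.sub (((hMc.sub h1).add h2).div_const (P k h))
        simpa using this
      exact tendsto_of_tendsto_of_tendsto_of_le_of_le hL hMc hlb hub
    -- choose N
    obtain ⟨N, hN⟩ := exists_nat_gt (2 / c)
    have hNpos : 0 < N := by
      by_contra hN0
      push_neg at hN0
      interval_cases N
      · simp at hN
        linarith [div_pos (by norm_num : (0:ℝ) < 2) hcpos]
    -- combinatorial part: a finset of N points all charged by a common power K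
    obtain ⟨m, hm1, hme⟩ := hirr 1
    have step : ∀ (t k : ℕ) (g : G), 0 < P k g → 0 < P (k + t * m) g := by
      intro t
      induction t with
      | zero => intro k g hg; simpa using hg
      | succ t ih =>
        intro k g hkg
        have h1 := ih k g hkg
        have h2 := convPow_pos_mul hμ h1 hme
        have h3 : k + (t + 1) * m = k + t * m + m := by ring
        rw [h3]
        simpa using h2
    have cover : ∀ g : G, ∃ r, r < m ∧ ∃ t, 0 < P (r + 1 + t * m) g := by
      intro g
      obtain ⟨n, hn1, hn⟩ := hirr g
      refine ⟨(n - 1) % m, Nat.mod_lt _ hm1, (n - 1) / m, ?_⟩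
      have hdm : m * ((n - 1) / m) + (n - 1) % m = n - 1 := Nat.div_add_mod (n - 1) m
      have hkey : (n - 1) % m + 1 + (n - 1) / m * m = n := by
        have h6 : (n - 1) % m + 1 + (n - 1) / m * m = m * ((n - 1) / m) + (n - 1) % m + 1 := by
          ring
        rw [h6, hdm]
        omega
      rw [hkey]
      exact hn
    have hinf : ∃ r, ({g : G | ∃ t, 0 < P (r + 1 + t * m) g}).Infinite := by
      by_contra hfin
      push_neg at hfin
      have hcov : (Set.univ : Set G) ⊆ ⋃ r ∈ Finset.range m, {g : G | ∃ t, 0 < P (r + 1 + t * m) g} := by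
        intro g _
        obtain ⟨r, hrm, ht⟩ := cover g
        exact Set.mem_biUnion (Finset.mem_range.2 hrm) ht
      have : (Set.univ : Set G).Finite :=
        Set.Finite.subset (Set.Finite.biUnion (Finset.range m).finite_toSet fun r _ => hfin r) hcov
      exact Set.infinite_univ this
    obtain ⟨r, hrinf⟩ := hinf
    obtain ⟨s, hsub, hsfin, hscard⟩ := hrinf.exists_subset_ncard_eq N
    set F := hsfin.toFinset with hF
    have hcard : F.card = N := by
      rw [← hscard, Set.ncard_eq_toFinset_card s hsfin]
    have hFt : ∀ h ∈ F, ∃ t, 0 < P (r + 1 + t * m) h := fun h hh => hsub (hsfin.mem_toFinset.1 hh)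
    choose tf htf using hFt
    set tfa : G → ℕ := fun h => if hh : h ∈ F then tf h hh else 0 with htfa
    set T := F.sup tfa with hT
    set K := r + 1 + T * m with hK
    have hKpos : ∀ h ∈ F, 0 < P K h := by
      intro h hh
      have h1 := htf h hh
      have hle : tf h hh ≤ T := by
        have h2 := Finset.le_sup (f := tfa) hh
        simpa [htfa, hh] using h2
      have hmul : tf h hh * m ≤ T * m := Nat.mul_le_mul_right m hle
      have hKeq : r + 1 + tf h hh * m + (T - tf h hh) * m = K := by
        rw [hK, Nat.sub_mul, Nat.add_assoc, Nat.add_sub_cancel' hmul]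
      rw [← hKeq]
      exact step (T - tf h hh) _ h h1
    -- eventual lower bound and contradiction
    have hev : ∀ᶠ n in atTop, ∀ h ∈ F, c / 2 < P n (gg (n + K) * h⁻¹) := by
      rw [Filter.eventually_all_finset]
      intro h hh
      exact (key K h (hKpos h hh)).eventually (eventually_gt_nhds (half_lt_self hcpos))
    obtain ⟨n, hn⟩ := hev.exists
    have hinj : ∀ a ∈ F, ∀ b ∈ F, gg (n + K) * a⁻¹ = gg (n + K) * b⁻¹ → a = b :=
      fun a _ b _ hab => inv_injective (mul_left_cancel hab)
    have hsum1 : ∑ h ∈ F, P n (gg (n + K) * h⁻¹)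
        = ∑ x ∈ F.image (fun h => gg (n + K) * h⁻¹), P n x :=
      (Finset.sum_image hinj).symm
    have hsum2 : ∑ x ∈ F.image (fun h => gg (n + K) * h⁻¹), P n x ≤ 1 :=
      sum_convPow_le_one hμ n _
    have hFne : F.Nonempty := Finset.card_pos.1 (by rw [hcard]; exact hNpos)
    have hsum3 : (N : ℝ) * (c / 2) < ∑ h ∈ F, P n (gg (n + K) * h⁻¹) := by
      have h4 : ∑ _h ∈ F, (c / 2) < ∑ h ∈ F, P n (gg (n + K) * h⁻¹) :=
        Finset.sum_lt_sum_of_nonempty hFne fun h hh => hn h hh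
      calc (N : ℝ) * (c / 2) = F.card * (c / 2) := by rw [hcard]
        _ = ∑ _h ∈ F, (c / 2) := by rw [Finset.sum_const, nsmul_eq_mul]
        _ < _ := h4
    have hlt1 : (N : ℝ) * (c / 2) < 1 := lt_of_lt_of_le (hsum3.trans_eq hsum1) hsum2
    have h2c : 2 < (N : ℝ) * c := by rwa [div_lt_iff₀ hcpos] at hN
    linarith
  -- conclusion with the identity subsequence
  refine ⟨id, strictMono_id, fun s g => ?_⟩
  have hup : ∀ i : ℕ, P (i + s) g ≤ M i := fun i => (hPM (i + s) g).trans
    (hManti (Nat.le_add_right i s))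
  have h0 : Tendsto M atTop (𝓝 0) := hcz ▸ hMc
  exact squeeze_zero (fun i => hnn (i + s) g) hup h0
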